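/- If X is an almost square Banach space and Y is any nonzero Banach space, then the injective tensor product X ⊗̂_ε Y is almost square. -/

import Mathlib

open Filter Topology

noncomputable section

/-- A Banach space is octahedral (OH). -/
def IsOctahedral (Z : Type*) [NormedAddCommGroup Z] : Prop :=
  ∀ (n : ℕ) (z : Fin n → Z), (∀ i, ‖z i‖ = 1) → ∀ ε : ℝ, 0 < ε →
    ∃ w : Z, ‖w‖ = 1 ∧ ∀ i, ‖z i + w‖ > 2 - ε

/-- Locally octahedral (LOH). -/
def IsLocallyOctahedral (Z : Type*) [NormedAddCommGroup Z] : Prop :=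
  ∀ z : Z, ‖z‖ = 1 → ∀ ε : ℝ, 0 < ε →
    ∃ w : Z, ‖w‖ = 1 ∧ ‖z + w‖ > 2 - ε ∧ ‖z - w‖ > 2 - ε

/-- Weakly octahedral (WOH). -/
def IsWeaklyOctahedral (X : Type*) [NormedAddCommGroup X] [NormedSpace ℝ X] : Prop :=
  ∀ (n : ℕ) (z : Fin n → X), (∀ i, ‖z i‖ = 1) → ∀ f : X →L[ℝ] ℝ, ‖f‖ ≤ 1 →
    ∀ ε : ℝ, 0 < ε → ∃ y : X, ‖y‖ = 1 ∧ ∀ i, ∀ t : ℝ, 0 < t →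
      ‖z i + t • y‖ ≥ (1 - ε) * (|f (z i)| + t) ∧
      ‖z i - t • y‖ ≥ (1 - ε) * (|f (z i)| + t)

/-- Almost square (ASQ), sequential formulation. -/
def IsASQ (Z : Type*) [NormedAddCommGroup Z] : Prop :=
  ∀ (n : ℕ) (z : Fin n → Z), (∀ i, ‖z i‖ = 1) →
    ∃ w : ℕ → Z, (∀ k, ‖w k‖ ≤ 1) ∧
      Tendsto (fun k => ‖w k‖) atTop (nhds 1) ∧
      ∀ i, Tendsto (fun k => ‖z i + w k‖) atTop (nhds 1) ∧
           Tendsto (fun k => ‖z i - w k‖) atTop (nhds 1)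

/-- Almost square (ASQ), finite-ε formulation. -/
def IsASQeps (Z : Type*) [NormedAddCommGroup Z] : Prop :=
  ∀ (n : ℕ) (z : Fin n → Z), (∀ i, ‖z i‖ = 1) → ∀ ε : ℝ, 0 < ε →
    ∃ w : Z, ‖w‖ = 1 ∧ ∀ i, ‖z i + w‖ ≤ 1 + ε ∧ ‖z i - w‖ ≤ 1 + ε

/-- Locally almost square (LASQ), sequential formulation. -/
def IsLASQ (Z : Type*) [NormedAddCommGroup Z] : Prop :=
  ∀ z : Z, ‖z‖ = 1 →
    ∃ w : ℕ → Z, (∀ k, ‖w k‖ ≤ 1) ∧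
      Tendsto (fun k => ‖w k‖) atTop (nhds 1) ∧
      Tendsto (fun k => ‖z + w k‖) atTop (nhds 1) ∧
      Tendsto (fun k => ‖z - w k‖) atTop (nhds 1)

/-- Locally almost square (LASQ), ε formulation. -/
def IsLASQeps (Z : Type*) [NormedAddCommGroup Z] : Prop :=
  ∀ z : Z, ‖z‖ = 1 → ∀ ε : ℝ, 0 < ε →
    ∃ w : Z, ‖w‖ = 1 ∧ ‖z + w‖ ≤ 1 + ε ∧ ‖z - w‖ ≤ 1 + ε

/-- Weakly almost square (WASQ). -/
def IsWASQ (Z : Type*) [NormedAddCommGroup Z] [NormedSpace ℝ Z] : Prop :=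
  ∀ z : Z, ‖z‖ = 1 →
    ∃ w : ℕ → Z, (∀ k, ‖w k‖ ≤ 1) ∧
      Tendsto (fun k => ‖w k‖) atTop (nhds 1) ∧
      Tendsto (fun k => ‖z + w k‖) atTop (nhds 1) ∧
      Tendsto (fun k => ‖z - w k‖) atTop (nhds 1) ∧
      ∀ f : Z →L[ℝ] ℝ, Tendsto (fun k => f (w k)) atTop (nhds 0)

/-- Local diameter two property: every slice of the unit ball has diameter two. -/
def HasLD2P (Z : Type*) [NormedAddCommGroup Z] [NormedSpace ℝ Z] : Prop :=
  ∀ f : Z →L[ℝ] ℝ, ‖f‖ = 1 → ∀ α : ℝ, 0 < α →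
    Metric.diam {x : Z | ‖x‖ ≤ 1 ∧ 1 - α < f x} = 2

/-- Diameter two property: every nonempty relatively weakly open subset of the unit
ball has diameter two. -/
def HasD2P (Z : Type*) [NormedAddCommGroup Z] [NormedSpace ℝ Z] : Prop :=
  ∀ U : Set Z, U.Nonempty → (∀ x ∈ U, ‖x‖ ≤ 1) →
    (∀ x ∈ U, ∃ (n : ℕ) (f : Fin n → Z →L[ℝ] ℝ) (δ : ℝ), 0 < δ ∧
      {y : Z | ‖y‖ ≤ 1 ∧ ∀ i, |f i y - f i x| < δ} ⊆ U) →
    Metric.diam U = 2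

/-- The Schur property. -/
def HasSchurProperty (Z : Type*) [SeminormedAddCommGroup Z] [NormedSpace ℝ Z] : Prop :=
  ∀ (u : ℕ → Z) (x : Z),
    (∀ f : Z →L[ℝ] ℝ, Tendsto (fun k => f (u k)) atTop (nhds (f x))) →
    Tendsto (fun k => ‖u k - x‖) atTop (nhds 0)

/-- The Dunford–Pettis property: every weakly compact operator is
weak-to-norm sequentially continuous. -/
def HasDPP (X : Type*) [NormedAddCommGroup X] [NormedSpace ℝ X] : Prop :=
  ∀ (Y : Type) (_ : NormedAddCommGroup Y) (_ : NormedSpace ℝ Y) (_ : CompleteSpace Y)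
    (T : X →L[ℝ] Y),
    (∃ K : Set (WeakSpace ℝ Y), IsCompact K ∧
      ∀ x : X, ‖x‖ ≤ 1 → toWeakSpace ℝ Y (T x) ∈ K) →
    ∀ (u : ℕ → X) (x : X),
      (∀ f : X →L[ℝ] ℝ, Tendsto (fun k => f (u k)) atTop (nhds (f x))) →
      Tendsto (fun k => ‖T (u k) - T x‖) atTop (nhds 0)

/-- `Z`, together with the bilinear-type map `t`, is (a realization of) the injective
tensor product `X ⊗̂_ε Y`: the span of elementary tensors is dense and the norm of any
linear combination of elementary tensors is given by the injective tensor norm. -/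
def IsInjTensorProduct (X Y Z : Type*) [NormedAddCommGroup X] [NormedSpace ℝ X]
    [NormedAddCommGroup Y] [NormedSpace ℝ Y] [NormedAddCommGroup Z] [NormedSpace ℝ Z]
    (t : X → Y → Z) : Prop :=
  (Submodule.span ℝ (Set.range fun p : X × Y => t p.1 p.2)).topologicalClosure = ⊤ ∧
  ∀ l : List (X × Y),
    ‖(l.map fun p => t p.1 p.2).sum‖ =
      sSup {s : ℝ | ∃ (f : X →L[ℝ] ℝ) (g : Y →L[ℝ] ℝ), ‖f‖ ≤ 1 ∧ ‖g‖ ≤ 1 ∧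
        s = |(l.map fun p => f p.1 * g p.2).sum|}

/-- `Z`, together with the map `t`, is (a realization of) the projective tensor product
`X ⊗̂_π Y`: the span of elementary tensors is dense and the norm of any combination of
elementary tensors is the infimum of `Σ ‖xᵢ‖‖yᵢ‖` over all representations (two formal
combinations represent the same tensor iff they agree against all pairs of functionals). -/
def IsProjTensorProduct (X Y Z : Type*) [NormedAddCommGroup X] [NormedSpace ℝ X]
    [NormedAddCommGroup Y] [NormedSpace ℝ Y] [NormedAddCommGroup Z] [NormedSpace ℝ Z]
    (t : X → Y → Z) : Prop :=
  (Submodule.span ℝ (Set.range fun p : X × Y => t p.1 p.2)).topologicalClosure = ⊤ ∧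
  ∀ l : List (X × Y),
    ‖(l.map fun p => t p.1 p.2).sum‖ =
      sInf {s : ℝ | ∃ l' : List (X × Y),
        (∀ (f : X →L[ℝ] ℝ) (g : Y →L[ℝ] ℝ),
          (l'.map fun p => f p.1 * g p.2).sum = (l.map fun p => f p.1 * g p.2).sum) ∧
        s = (l'.map fun p => ‖p.1‖ * ‖p.2‖).sum}

/-- `Z`, together with the diagonal map `δ : x ↦ x^N`, is (a realization of) the `N`-fold
injective symmetric tensor product `⊗̂_{ε,s,N} X`. -/
def IsInjSymTensorProduct (X : Type*) [NormedAddCommGroup X] [NormedSpace ℝ X] (N : ℕ)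
    (Z : Type*) [NormedAddCommGroup Z] [NormedSpace ℝ Z] (δ : X → Z) : Prop :=
  (Submodule.span ℝ (Set.range δ)).topologicalClosure = ⊤ ∧
  ∀ l : List (ℝ × X),
    ‖(l.map fun p => p.1 • δ p.2).sum‖ =
      sSup {s : ℝ | ∃ f : X →L[ℝ] ℝ, ‖f‖ ≤ 1 ∧
        s = |(l.map fun p => p.1 * (f p.2) ^ N).sum|}

/-- `Z`, together with the diagonal map `δ : x ↦ x^N`, is (a realization of) the `N`-fold
projective symmetric tensor product `⊗̂_{π,s,N} X`. -/
def IsProjSymTensorProduct (X : Type*) [NormedAddCommGroup X] [NormedSpace ℝ X] (N : ℕ)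
    (Z : Type*) [NormedAddCommGroup Z] [NormedSpace ℝ Z] (δ : X → Z) : Prop :=
  (Submodule.span ℝ (Set.range δ)).topologicalClosure = ⊤ ∧
  ∀ l : List (ℝ × X),
    ‖(l.map fun p => p.1 • δ p.2).sum‖ =
      sInf {s : ℝ | ∃ l' : List (ℝ × X),
        (∀ f : X →L[ℝ] ℝ,
          (l'.map fun p => p.1 * (f p.2) ^ N).sum = (l.map fun p => p.1 * (f p.2) ^ N).sum) ∧
        s = (l'.map fun p => |p.1| * ‖p.2‖ ^ N).sum}

/-- An operator `T : X* → Y` is weak*-to-weakly continuous. -/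
def WeakStarToWeakContinuous {X Y : Type*} [NormedAddCommGroup X] [NormedSpace ℝ X]
    [NormedAddCommGroup Y] [NormedSpace ℝ Y] (T : (X →L[ℝ] ℝ) →L[ℝ] Y) : Prop :=
  ∀ g : Y →L[ℝ] ℝ, Continuous fun f : WeakDual ℝ X => g (T f)

/-- The elementary tensor `x ⊗ y` regarded as the operator `x* ↦ x*(x) • y` in `L(X*, Y)`. -/
def elemTensor {X Y : Type*} [NormedAddCommGroup X] [NormedSpace ℝ X]
    [NormedAddCommGroup Y] [NormedSpace ℝ Y] (x : X) (y : Y) : (X →L[ℝ] ℝ) →L[ℝ] Y :=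
  (ContinuousLinearMap.apply ℝ ℝ x).smulRight y

/-- `n(Z, u) = 1`, i.e. `D(Z,u) = {f ∈ B_{Z*} : f(u) = 1}` is a norming set for `Z`. -/
def NormOneUnitary (Z : Type*) [NormedAddCommGroup Z] [NormedSpace ℝ Z] (u : Z) : Prop :=
  ‖u‖ = 1 ∧ ∀ z : Z, ‖z‖ ≤ sSup {r : ℝ | ∃ g : Z →L[ℝ] ℝ, ‖g‖ ≤ 1 ∧ g u = 1 ∧ r = |g z|}

/-- Asplund space: every closed separable subspace has separable dual. -/
def IsAsplund (Y : Type*) [NormedAddCommGroup Y] [NormedSpace ℝ Y] : Prop :=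
  ∀ S : Submodule ℝ Y, IsClosed (S : Set Y) → TopologicalSpace.SeparableSpace S →
    TopologicalSpace.SeparableSpace ((↥S) →L[ℝ] ℝ)

/-- The (metric) approximation-type property: finite-rank operators approximate the
identity uniformly on compact sets. -/
def HasAP (E : Type*) [NormedAddCommGroup E] [NormedSpace ℝ E] : Prop :=
  ∀ K : Set E, IsCompact K → ∀ ε : ℝ, 0 < ε →
    ∃ T : E →L[ℝ] E, FiniteDimensional ℝ (LinearMap.range (T : E →ₗ[ℝ] E)) ∧
      ∀ x ∈ K, ‖T x - x‖ ≤ ε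

end


section Aux

variable {X Y Z : Type*} [NormedAddCommGroup X] [NormedSpace ℝ X]
  [NormedAddCommGroup Y] [NormedSpace ℝ Y]
  [NormedAddCommGroup Z] [NormedSpace ℝ Z]

variable {t : X → Y → Z}

theorem list_sum_map_neg {α : Type*} (l : List α) (f : α → ℝ) :
    (l.map fun x => -(f x)).sum = -(l.map f).sum := by
  induction l with
  | nil => simp
  | cons a l ih => simp [ih]; ring

theorem zlist_sum_map_neg {α : Type*} (l : List α) (f : α → Z) :
    (l.map fun x => -(f x)).sum = -(l.map f).sum := by
  induction l with
  | nil => simp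
  | cons a l ih => simp [ih]; abel

theorem list_sum_map_smul {α : Type*} (l : List α) (c : ℝ) (f : α → Z) :
    (l.map fun x => c • f x).sum = c • (l.map f).sum := by
  induction l with
  | nil => simp
  | cons a l ih => simp [ih, smul_add]

theorem abs_list_sum_le (l : List ℝ) : |l.sum| ≤ (l.map fun x => |x|).sum := by
  induction l with
  | nil => simp
  | cons a l ih =>
    simp only [List.sum_cons, List.map_cons]
    exact (abs_add_le _ _).trans (by linarith)

def NormHyp (t : X → Y → Z) : Prop :=
  ∀ l : List (X × Y),
    ‖(l.map fun p => t p.1 p.2).sum‖ =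
      sSup {s : ℝ | ∃ (f : X →L[ℝ] ℝ) (g : Y →L[ℝ] ℝ), ‖f‖ ≤ 1 ∧ ‖g‖ ≤ 1 ∧
        s = |(l.map fun p => f p.1 * g p.2).sum|}

theorem normT_le (hn : NormHyp t) (l : List (X × Y)) {C : ℝ} (hC : 0 ≤ C)
    (h : ∀ (f : X →L[ℝ] ℝ) (g : Y →L[ℝ] ℝ), ‖f‖ ≤ 1 → ‖g‖ ≤ 1 →
      |(l.map fun p => f p.1 * g p.2).sum| ≤ C) :
    ‖(l.map fun p => t p.1 p.2).sum‖ ≤ C := by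
  rw [hn]
  refine Real.sSup_le ?_ hC
  rintro s ⟨f, g, hf, hg, rfl⟩
  exact h f g hf hg

theorem bddAboveSet (l : List (X × Y)) :
    BddAbove {s : ℝ | ∃ (f : X →L[ℝ] ℝ) (g : Y →L[ℝ] ℝ), ‖f‖ ≤ 1 ∧ ‖g‖ ≤ 1 ∧
        s = |(l.map fun p => f p.1 * g p.2).sum|} := by
  refine ⟨(l.map fun p => ‖p.1‖ * ‖p.2‖).sum, ?_⟩
  rintro s ⟨f, g, hf, hg, rfl⟩
  calc |(l.map fun p => f p.1 * g p.2).sum|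
      ≤ ((l.map fun p => f p.1 * g p.2).map fun x => |x|).sum := abs_list_sum_le _
    _ = (l.map fun p => |f p.1 * g p.2|).sum := by rw [List.map_map]; rfl
    _ ≤ (l.map fun p => ‖p.1‖ * ‖p.2‖).sum := by
        refine List.sum_le_sum fun p _ => ?_
        rw [abs_mul]
        gcongr
        · exact (f.le_opNorm p.1).trans (by simpa using mul_le_mul_of_nonneg_right hf (norm_nonneg p.1))
        · exact (g.le_opNorm p.2).trans (by simpa using mul_le_mul_of_nonneg_right hg (norm_nonneg p.2))

theorem le_normT (hn : NormHyp t) (l : List (X × Y)) {f : X →L[ℝ] ℝ} {g : Y →L[ℝ] ℝ}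
    (hf : ‖f‖ ≤ 1) (hg : ‖g‖ ≤ 1) :
    |(l.map fun p => f p.1 * g p.2).sum| ≤ ‖(l.map fun p => t p.1 p.2).sum‖ := by
  rw [hn]
  exact le_csSup (bddAboveSet l) ⟨f, g, hf, hg, rfl⟩

theorem T_eq (hn : NormHyp t) {l l' : List (X × Y)}
    (h : ∀ (f : X →L[ℝ] ℝ) (g : Y →L[ℝ] ℝ),
      (l.map fun p => f p.1 * g p.2).sum = (l'.map fun p => f p.1 * g p.2).sum) :
    (l.map fun p => t p.1 p.2).sum = (l'.map fun p => t p.1 p.2).sum := by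
  -- first: t (-x) y = - t x y
  have hneg : ∀ (x : X) (y : Y), t (-x) y = - t x y := by
    intro x y
    have h0 : ‖(([(x, y), (-x, y)] : List (X × Y)).map fun p => t p.1 p.2).sum‖ = 0 := by
      refine le_antisymm (normT_le hn _ le_rfl fun f g hf hg => ?_) (norm_nonneg _)
      simp [mul_comm]
    simp only [List.map_cons, List.map_nil, List.sum_cons, List.sum_nil, add_zero,
      norm_eq_zero] at h0
    exact eq_neg_of_add_eq_zero_right h0
  have key : ‖((l ++ l'.map fun p => (-p.1, p.2)).map fun p => t p.1 p.2).sum‖ ≤ 0 := by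
    refine normT_le hn _ le_rfl fun f g hf hg => ?_
    have e1 : ((l ++ l'.map fun p => (-p.1, p.2)).map fun p => f p.1 * g p.2).sum
        = (l.map fun p => f p.1 * g p.2).sum - (l'.map fun p => f p.1 * g p.2).sum := by
      rw [List.map_append, List.sum_append, List.map_map]
      have e2 : ((fun p : X × Y => f p.1 * g p.2) ∘ fun p : X × Y => (-p.1, p.2))
          = fun p : X × Y => -(f p.1 * g p.2) := by
        funext p; simp
      rw [e2, list_sum_map_neg]
      ring
    rw [e1, h f g]
    simp
  have e3 : ((l ++ l'.map fun p => (-p.1, p.2)).map fun p => t p.1 p.2).sum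
      = (l.map fun p => t p.1 p.2).sum - (l'.map fun p => t p.1 p.2).sum := by
    rw [List.map_append, List.sum_append, List.map_map]
    have e2 : ((fun p : X × Y => t p.1 p.2) ∘ fun p : X × Y => (-p.1, p.2))
        = fun p : X × Y => -(t p.1 p.2) := by
      funext p; simp [hneg]
    rw [e2, zlist_sum_map_neg]
    abel
  rw [e3] at key
  have := norm_le_zero_iff.mp key
  exact sub_eq_zero.mp this


theorem t_neg (hn : NormHyp t) (x : X) (y : Y) : t (-x) y = - t x y := by
  have h := T_eq hn (l := [(-x, y), (x, y)]) (l' := []) (fun f g => by simp)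
  simp only [List.map_cons, List.map_nil, List.sum_cons, List.sum_nil, add_zero] at h
  exact eq_neg_of_add_eq_zero_left h

theorem t_add (hn : NormHyp t) (a b : X) (y : Y) : t (a + b) y = t a y + t b y := by
  have h := T_eq hn (l := [(a + b, y)]) (l' := [(a, y), (b, y)])
    (fun f g => by simp; ring)
  simpa using h

theorem t_norm (hn : NormHyp t) (x : X) (y : Y) : ‖t x y‖ = ‖x‖ * ‖y‖ := by
  have hone : t x y = (([(x, y)] : List (X × Y)).map fun p => t p.1 p.2).sum := by simp
  refine le_antisymm ?_ ?_
  · rw [hone]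
    refine normT_le hn _ (by positivity) fun f g hf hg => ?_
    simp only [List.map_cons, List.map_nil, List.sum_cons, List.sum_nil, add_zero, abs_mul]
    gcongr
    · exact (f.le_opNorm x).trans (by nlinarith [norm_nonneg x, norm_nonneg f])
    · exact (g.le_opNorm y).trans (by nlinarith [norm_nonneg y, norm_nonneg g])
  · obtain ⟨f, hf, hfx⟩ := exists_dual_vector'' ℝ x
    obtain ⟨g, hg, hgy⟩ := exists_dual_vector'' ℝ y
    have := le_normT hn [(x, y)] hf hg
    simp only [List.map_cons, List.map_nil, List.sum_cons, List.sum_nil, add_zero] at this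
    have hfx' : f x = ‖x‖ := hfx
    have hgy' : g y = ‖y‖ := hgy
    calc ‖x‖ * ‖y‖ = |f x * g y| := by
          rw [hfx', hgy', abs_of_nonneg (by positivity)]
      _ ≤ _ := this

theorem t_smul (hn : NormHyp t) (c : ℝ) (x : X) (y : Y) : t (c • x) y = c • t x y := by
  let φ : X →+ Z := AddMonoidHom.mk' (fun x => t x y) (fun a b => t_add hn a b y)
  have hsub : ∀ a b : X, t a y - t b y = t (a - b) y := by
    intro a b
    have := t_add hn (a - b) b y
    rw [sub_add_cancel] at this
    rw [this]; abel
  have hφ : Continuous φ := by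
    refine (LipschitzWith.of_dist_le_mul (K := ‖y‖₊) fun a b => ?_).continuous
    show dist (t a y) (t b y) ≤ ‖y‖ * dist a b
    rw [dist_eq_norm, dist_eq_norm, hsub, t_norm hn]
    ring_nf
    exact le_rfl
  exact map_real_smul φ hφ c x

theorem span_rep (hn : NormHyp t) (v : Z)
    (hv : v ∈ Submodule.span ℝ (Set.range fun p : X × Y => t p.1 p.2)) :
    ∃ l : List (X × Y), (l.map fun p => t p.1 p.2).sum = v := by
  induction hv using Submodule.span_induction with
  | mem z hz =>
    obtain ⟨p, rfl⟩ := hz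
    exact ⟨[p], by simp⟩
  | zero => exact ⟨[], by simp⟩
  | add a b _ _ iha ihb =>
    obtain ⟨l, hl⟩ := iha
    obtain ⟨l', hl'⟩ := ihb
    exact ⟨l ++ l', by rw [List.map_append, List.sum_append, hl, hl']⟩
  | smul c a _ iha =>
    obtain ⟨l, hl⟩ := iha
    refine ⟨l.map fun p => (c • p.1, p.2), ?_⟩
    rw [List.map_map]
    have e : ((fun p : X × Y => t p.1 p.2) ∘ fun p : X × Y => (c • p.1, p.2))
        = fun p : X × Y => c • t p.1 p.2 := by
      funext p; exact t_smul hn c p.1 p.2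
    rw [e, ← hl]
    exact list_sum_map_smul l c _

theorem apply_vg (l : List (X × Y)) (f : X →L[ℝ] ℝ) (g : Y →L[ℝ] ℝ) :
    f ((l.map fun p => g p.2 • p.1).sum) = (l.map fun p => f p.1 * g p.2).sum := by
  rw [map_list_sum, List.map_map]
  refine congrArg List.sum (List.map_congr_left fun p _ => ?_)
  simp [mul_comm]

theorem norm_vg_le (hn : NormHyp t) (l : List (X × Y)) {g : Y →L[ℝ] ℝ} (hg : ‖g‖ ≤ 1) :
    ‖(l.map fun p => g p.2 • p.1).sum‖ ≤ ‖(l.map fun p => t p.1 p.2).sum‖ := by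
  refine NormedSpace.norm_le_dual_bound ℝ _ (norm_nonneg _) fun f => ?_
  rcases eq_or_ne f 0 with rfl | hf0
  · simp
  · have hnf : 0 < ‖f‖ := norm_pos_iff.mpr hf0
    set f' : X →L[ℝ] ℝ := ‖f‖⁻¹ • f with hf'
    have hf'le : ‖f'‖ ≤ 1 := by
      rw [hf']
      have : ‖(‖f‖⁻¹ : ℝ) • f‖ = ‖f‖⁻¹ * ‖f‖ := by
        rw [norm_smul]
        simp
      rw [this, inv_mul_cancel₀ hnf.ne']
    have h1 : |f' ((l.map fun p => g p.2 • p.1).sum)| ≤ ‖(l.map fun p => t p.1 p.2).sum‖ := by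
      rw [apply_vg]
      exact le_normT hn l hf'le hg
    have h2 : f' ((l.map fun p => g p.2 • p.1).sum)
        = ‖f‖⁻¹ * f ((l.map fun p => g p.2 • p.1).sum) := rfl
    rw [h2, abs_mul, abs_of_nonneg (inv_nonneg.mpr hnf.le)] at h1
    calc ‖f ((l.map fun p => g p.2 • p.1).sum)‖
        = ‖f‖ * (‖f‖⁻¹ * |f ((l.map fun p => g p.2 • p.1).sum)|) := by
          rw [← mul_assoc, mul_inv_cancel₀ hnf.ne', one_mul]; rfl
      _ ≤ ‖(l.map fun p => t p.1 p.2).sum‖ * ‖f‖ := by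
          rw [mul_comm]
          exact mul_le_mul_of_nonneg_right h1 hnf.le

theorem key_est (hn : NormHyp t) (l : List (X × Y)) (x : X) (y : Y) (hy : ‖y‖ ≤ 1)
    {C : ℝ} (hC : 0 ≤ C)
    (H : ∀ g : Y →L[ℝ] ℝ, ‖g‖ ≤ 1 → ∀ s : ℝ, |s| ≤ 1 →
      ‖(l.map fun p => g p.2 • p.1).sum + s • x‖ ≤ C) :
    ‖(l.map fun p => t p.1 p.2).sum + t x y‖ ≤ C := by
  have he : (l.map fun p => t p.1 p.2).sum + t x y
      = ((l ++ [(x, y)]).map fun p => t p.1 p.2).sum := by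
    rw [List.map_append, List.sum_append]
    simp
  rw [he]
  refine normT_le hn _ hC fun f g hf hg => ?_
  have e1 : ((l ++ [(x, y)]).map fun p => f p.1 * g p.2).sum
      = f ((l.map fun p => g p.2 • p.1).sum + g y • x) := by
    rw [List.map_append, List.sum_append, map_add, apply_vg]
    simp [mul_comm]
  rw [e1]
  have hs : |g y| ≤ 1 := by
    calc |g y| ≤ ‖g‖ * ‖y‖ := g.le_opNorm y
      _ ≤ 1 := by nlinarith [norm_nonneg g, norm_nonneg y]
  calc |f ((l.map fun p => g p.2 • p.1).sum + g y • x)|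
      ≤ ‖f‖ * ‖(l.map fun p => g p.2 • p.1).sum + g y • x‖ := f.le_opNorm _
    _ ≤ 1 * C := by
        refine mul_le_mul hf (H g hg (g y) hs) (norm_nonneg _) zero_le_one
    _ = C := one_mul C

theorem seg {V : Type*} [NormedAddCommGroup V] [NormedSpace ℝ V]
    {v x : V} {M : ℝ} (hv : ‖v‖ ≤ M) (h1 : ‖v + x‖ ≤ M) (h2 : ‖v - x‖ ≤ M)
    {s : ℝ} (hs : |s| ≤ 1) : ‖v + s • x‖ ≤ M := by
  rcases le_total 0 s with h | h
  · have hs1 : s ≤ 1 := (le_abs_self s).trans hs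
    have e : v + s • x = (1 - s) • v + s • (v + x) := by module
    rw [e]
    calc ‖(1 - s) • v + s • (v + x)‖ ≤ ‖(1 - s) • v‖ + ‖s • (v + x)‖ := norm_add_le _ _
      _ = (1 - s) * ‖v‖ + s * ‖v + x‖ := by
          rw [norm_smul, norm_smul, Real.norm_eq_abs, Real.norm_eq_abs,
            abs_of_nonneg (by linarith), abs_of_nonneg h]
      _ ≤ (1 - s) * M + s * M := by
          have h0 : 0 ≤ M := le_trans (norm_nonneg v) hv
          gcongr <;> linarith
      _ = M := by ring
  · have hs1 : -1 ≤ s := by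
      have := (neg_abs_le s).trans (le_abs_self s) -- dummy
      rcases abs_le.mp hs with ⟨h1', _⟩
      linarith
    have e : v + s • x = (1 + s) • v + (-s) • (v - x) := by module
    rw [e]
    calc ‖(1 + s) • v + (-s) • (v - x)‖ ≤ ‖(1 + s) • v‖ + ‖(-s) • (v - x)‖ := norm_add_le _ _
      _ = (1 + s) * ‖v‖ + (-s) * ‖v - x‖ := by
          rw [norm_smul, norm_smul, Real.norm_eq_abs, Real.norm_eq_abs,
            abs_of_nonneg (by linarith), abs_of_nonneg (by linarith)]
      _ ≤ (1 + s) * M + (-s) * M := by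
          have h0 : 0 ≤ M := le_trans (norm_nonneg v) hv
          gcongr <;> linarith
      _ = M := by ring

theorem list_sum_eq_finsum {α β : Type*} [AddCommMonoid β] (l : List α) (f : α → β) :
    (l.map f).sum = ∑ j : Fin l.length, f (l.get j) := by
  rw [← List.ofFn_getElem_eq_map, List.sum_ofFn]
  rfl

theorem scale_est {V : Type*} [NormedAddCommGroup V] [NormedSpace ℝ V] {u x : V} {ε : ℝ}
    (hε : 0 ≤ ε) (hu : ‖u‖ = 1) (hx : ‖x‖ ≤ 1) (hux : ‖u + x‖ ≤ 1 + ε)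
    (r : ℝ) (hr : 0 ≤ r) :
    ‖r • u + x‖ ≤ max r 1 + ε := by
  rcases le_total r 1 with h | h
  · have e : r • u + x = r • (u + x) + (1 - r) • x := by module
    rw [e]
    calc ‖r • (u + x) + (1 - r) • x‖ ≤ ‖r • (u + x)‖ + ‖(1 - r) • x‖ := norm_add_le _ _
      _ = r * ‖u + x‖ + (1 - r) * ‖x‖ := by
          rw [norm_smul, norm_smul, Real.norm_eq_abs, Real.norm_eq_abs,
            abs_of_nonneg hr, abs_of_nonneg (by linarith)]
      _ ≤ r * (1 + ε) + (1 - r) * 1 := by gcongr <;> linarith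
      _ = 1 + r * ε := by ring
      _ ≤ max r 1 + ε := by
          have : r * ε ≤ ε := by nlinarith
          have h1 : (1 : ℝ) ≤ max r 1 := le_max_right r 1
          linarith
  · have e : r • u + x = (r - 1) • u + (u + x) := by module
    rw [e]
    calc ‖(r - 1) • u + (u + x)‖ ≤ ‖(r - 1) • u‖ + ‖u + x‖ := norm_add_le _ _
      _ = (r - 1) * 1 + ‖u + x‖ := by
          rw [norm_smul, hu, Real.norm_eq_abs, abs_of_nonneg (by linarith)]
      _ ≤ (r - 1) * 1 + (1 + ε) := by linarith
      _ = r + ε := by ring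
      _ ≤ max r 1 + ε := by
          have : r ≤ max r 1 := le_max_left r 1
          linarith

theorem exists_unit {W : Type*} [NormedAddCommGroup W] [NormedSpace ℝ W] (hX : IsASQ W) :
    ∃ e : W, ‖e‖ = 1 := by
  obtain ⟨w0, _, hn0, _⟩ := hX 0 Fin.elim0 (fun i => i.elim0)
  have : ∀ᶠ k in atTop, (1 : ℝ) / 2 < ‖w0 k‖ := hn0.eventually (eventually_gt_nhds (by norm_num))
  obtain ⟨k, hk⟩ := this.exists
  have hne : ‖w0 k‖ ≠ 0 := by positivity
  refine ⟨‖w0 k‖⁻¹ • w0 k, ?_⟩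
  rw [norm_smul, Real.norm_eq_abs, abs_of_nonneg (by positivity), inv_mul_cancel₀ hne]

theorem lemA {W : Type*} [NormedAddCommGroup W] [NormedSpace ℝ W] (hX : IsASQ W)
    (m : ℕ) (v : Fin m → W) {ε : ℝ} (hε : 0 < ε) :
    ∃ x : W, ‖x‖ ≤ 1 ∧ 1 - ε ≤ ‖x‖ ∧
      ∀ j, ‖v j + x‖ ≤ max ‖v j‖ 1 + ε ∧ ‖v j - x‖ ≤ max ‖v j‖ 1 + ε := by
  classical
  obtain ⟨e, he⟩ := exists_unit hX
  set u : Fin m → W := fun j => if h : v j = 0 then e else ‖v j‖⁻¹ • v j with hu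
  have hunorm : ∀ j, ‖u j‖ = 1 := by
    intro j
    rw [hu]
    by_cases h : v j = 0
    · simp [h, he]
    · have hne : ‖v j‖ ≠ 0 := norm_ne_zero_iff.mpr h
      simp only [h, dif_neg, dite_false]
      rw [norm_smul, Real.norm_eq_abs, abs_of_nonneg (by positivity), inv_mul_cancel₀ hne]
  obtain ⟨w, hwle, hw1, hpm⟩ := hX m u hunorm
  have E1 : ∀ᶠ k in atTop, 1 - ε < ‖w k‖ := hw1.eventually (eventually_gt_nhds (by linarith))
  have E2 : ∀ᶠ k in atTop, ∀ j, ‖u j + w k‖ < 1 + ε :=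
    eventually_all.mpr fun j => (hpm j).1.eventually (eventually_lt_nhds (by linarith))
  have E3 : ∀ᶠ k in atTop, ∀ j, ‖u j - w k‖ < 1 + ε :=
    eventually_all.mpr fun j => (hpm j).2.eventually (eventually_lt_nhds (by linarith))
  obtain ⟨k, h1, h2, h3⟩ := (E1.and (E2.and E3)).exists
  refine ⟨w k, hwle k, h1.le, fun j => ?_⟩
  by_cases h : v j = 0
  · constructor
    · rw [h, zero_add]
      simp only [norm_zero, max_eq_right zero_le_one]
      have := hwle k
      linarith
    · rw [h, zero_sub, norm_neg]
      simp only [norm_zero, max_eq_right zero_le_one]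
      have := hwle k
      linarith
  · have hne : ‖v j‖ ≠ 0 := norm_ne_zero_iff.mpr h
    have huj : u j = ‖v j‖⁻¹ • v j := by rw [hu]; simp [h]
    have hvj : v j = ‖v j‖ • u j := by
      rw [huj, smul_smul, mul_inv_cancel₀ hne, one_smul]
    constructor
    · calc ‖v j + w k‖ = ‖(‖v j‖ • u j) + w k‖ := by rw [← hvj]
        _ ≤ max ‖v j‖ 1 + ε :=
            scale_est hε.le (hunorm j) (hwle k) (h2 j).le ‖v j‖ (norm_nonneg _)
    · have hminus : ‖u j + -(w k)‖ ≤ 1 + ε := by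
        rw [← sub_eq_add_neg]
        exact (h3 j).le
      calc ‖v j - w k‖ = ‖(‖v j‖ • u j) + -(w k)‖ := by rw [← hvj, sub_eq_add_neg]
        _ ≤ max ‖v j‖ 1 + ε :=
            scale_est hε.le (hunorm j) (by rw [norm_neg]; exact hwle k) hminus ‖v j‖ (norm_nonneg _)

end Aux

theorem statement5 (X Y Z : Type*) [NormedAddCommGroup X] [NormedSpace ℝ X] [CompleteSpace X]
    [NormedAddCommGroup Y] [NormedSpace ℝ Y] [CompleteSpace Y] [Nontrivial Y]
    [NormedAddCommGroup Z] [NormedSpace ℝ Z] [CompleteSpace Z]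
    (t : X → Y → Z) (ht : IsInjTensorProduct X Y Z t)
    (hX : IsASQ X) :
    IsASQ Z := by
  obtain ⟨hdense, hn⟩ := ht
  -- a unit vector in Y
  obtain ⟨y1, hy1⟩ := exists_ne (0 : Y)
  have hy1n : ‖y1‖ ≠ 0 := norm_ne_zero_iff.mpr hy1
  set y0 : Y := ‖y1‖⁻¹ • y1 with hy0def
  have hy0 : ‖y0‖ = 1 := by
    rw [hy0def, norm_smul, Real.norm_eq_abs, abs_of_nonneg (by positivity),
      inv_mul_cancel₀ hy1n]
  intro n z hz
  -- main claim
  have claim : ∀ δ : ℝ, 0 < δ → ∃ w : Z, ‖w‖ ≤ 1 ∧ 1 - δ ≤ ‖w‖ ∧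
      ∀ i, ‖z i + w‖ ≤ 1 + 5 * δ ∧ ‖z i - w‖ ≤ 1 + 5 * δ := by
    intro δ hδ
    -- approximate each z i by a list of elementary tensors
    have hrep : ∀ i : Fin n, ∃ l : List (X × Y),
        ‖z i - (l.map fun p => t p.1 p.2).sum‖ < δ := by
      intro i
      have hcl : z i ∈ closure ((Submodule.span ℝ
          (Set.range fun p : X × Y => t p.1 p.2)) : Set Z) := by
        have h1 : z i ∈ (Submodule.span ℝ
            (Set.range fun p : X × Y => t p.1 p.2)).topologicalClosure := by
          rw [hdense]; trivial
        exact h1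
      obtain ⟨u, hu, hdu⟩ := Metric.mem_closure_iff.mp hcl δ hδ
      obtain ⟨l, hl⟩ := span_rep hn u hu
      exact ⟨l, by rw [hl, ← dist_eq_norm]; exact hdu⟩
    choose l hl using hrep
    -- bound for each list
    set R : Fin n → ℝ := fun i => ((l i).map fun p => ‖p.2‖).sum with hR
    have hRb : ∀ i, ∀ p ∈ l i, ‖p.2‖ ≤ R i := by
      intro i p hp
      exact List.single_le_sum (l := (l i).map fun p => ‖p.2‖)
        (by intro x hx; obtain ⟨q, _, rfl⟩ := List.mem_map.mp hx; exact norm_nonneg _)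
        ‖p.2‖ (List.mem_map.mpr ⟨p, hp, rfl⟩)
    -- the compact set
    set Φ : ∀ i : Fin n, (Fin (l i).length → ℝ) → X :=
      fun i c => ∑ j, c j • ((l i).get j).1 with hΦ
    set K : Set X := ⋃ i, Φ i '' Metric.closedBall 0 (R i) with hK
    have hKcpt : IsCompact K := by
      refine isCompact_iUnion fun i => (isCompact_closedBall _ _).image ?_
      exact continuous_finset_sum _ fun j _ => (continuous_apply j).smul continuous_const
    -- membership of the vectors v_g
    have hmem : ∀ (i : Fin n) (g : Y →L[ℝ] ℝ), ‖g‖ ≤ 1 →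
        ((l i).map fun p => g p.2 • p.1).sum ∈ K := by
      intro i g hg
      refine Set.mem_iUnion.mpr ⟨i, ⟨fun j => g ((l i).get j).2, ?_, ?_⟩⟩
      · rw [Metric.mem_closedBall, dist_zero_right]
        have hR0 : 0 ≤ R i := by
          refine List.sum_nonneg ?_
          intro x hx; obtain ⟨q, _, rfl⟩ := List.mem_map.mp hx; exact norm_nonneg _
        refine (pi_norm_le_iff_of_nonneg hR0).mpr fun j => ?_
        calc ‖g ((l i).get j).2‖ ≤ ‖g‖ * ‖((l i).get j).2‖ := g.le_opNorm _
          _ ≤ 1 * R i := by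
              refine mul_le_mul hg (hRb i _ (List.get_mem (l i) j)) (norm_nonneg _) zero_le_one
          _ = R i := one_mul _
      · rw [hΦ]
        exact (list_sum_eq_finsum (l i) fun p => g p.2 • p.1).symm
    -- finite δ-net
    obtain ⟨s, hsfin, hscov⟩ := Metric.totallyBounded_iff.mp hKcpt.totallyBounded δ hδ
    obtain ⟨m, fv, hfv⟩ := hsfin.fin_embedding
    -- apply the ASQ property of X at the net points
    obtain ⟨x, hx1, hx2, hx3⟩ := lemA hX m (fun j => fv j) hδ
    -- the candidate
    refine ⟨t x y0, ?_, ?_, ?_⟩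
    · rw [t_norm hn, hy0, mul_one]; exact hx1
    · rw [t_norm hn, hy0, mul_one]; exact hx2
    · intro i
      -- the crucial estimate H
      have hTl : ‖((l i).map fun p => t p.1 p.2).sum‖ ≤ 1 + δ := by
        calc ‖((l i).map fun p => t p.1 p.2).sum‖
            ≤ ‖z i‖ + ‖z i - ((l i).map fun p => t p.1 p.2).sum‖ := by
              simpa [sub_sub_cancel] using
                norm_sub_le (z i) (z i - ((l i).map fun p => t p.1 p.2).sum)
        _ ≤ 1 + δ := by rw [hz i]; linarith [(hl i).le]
      have H : ∀ g : Y →L[ℝ] ℝ, ‖g‖ ≤ 1 → ∀ s : ℝ, |s| ≤ 1 →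
          ‖((l i).map fun p => g p.2 • p.1).sum + s • x‖ ≤ 1 + 4 * δ := by
        intro g hg s hs
        set v : X := ((l i).map fun p => g p.2 • p.1).sum with hv
        have hvK : v ∈ K := hmem i g hg
        obtain ⟨p, hps, hpd⟩ := Set.mem_iUnion₂.mp (hscov hvK)
        obtain ⟨j, rfl⟩ := hfv ▸ hps
        have hvn : ‖v‖ ≤ 1 + δ := le_trans (norm_vg_le hn (l i) hg) hTl
        have hpn : ‖(fv j : X)‖ ≤ 1 + 2 * δ := by
          have h1 : ‖(fv j : X) - v‖ < δ := by
            rw [← dist_eq_norm, dist_comm]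
            exact Metric.mem_ball.mp hpd
          have h2 := norm_add_le ((fv j : X) - v) v
          rw [sub_add_cancel] at h2
          linarith
        have hmax : max ‖(fv j : X)‖ 1 ≤ 1 + 2 * δ := by
          refine max_le hpn (by linarith)
        have hd : ‖v - fv j‖ < δ := by
          rw [← dist_eq_norm]
          exact Metric.mem_ball.mp hpd
        have hplus : ‖v + x‖ ≤ 1 + 4 * δ := by
          have h1 : ‖(fv j : X) + x‖ ≤ max ‖(fv j : X)‖ 1 + δ := (hx3 j).1
          have h2 : ‖v + x‖ ≤ ‖v - fv j‖ + ‖(fv j : X) + x‖ := by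
            have e : v + x = (v - fv j) + ((fv j : X) + x) := by abel
            rw [e]; exact norm_add_le _ _
          linarith
        have hminus : ‖v - x‖ ≤ 1 + 4 * δ := by
          have h1 : ‖(fv j : X) - x‖ ≤ max ‖(fv j : X)‖ 1 + δ := (hx3 j).2
          have h2 : ‖v - x‖ ≤ ‖v - fv j‖ + ‖(fv j : X) - x‖ := by
            have e : v - x = (v - fv j) + ((fv j : X) - x) := by abel
            rw [e]; exact norm_add_le _ _
          linarith
        exact seg (by linarith) hplus hminus hs
      have hCpos : (0 : ℝ) ≤ 1 + 4 * δ := by linarith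
      have hkeyp : ‖((l i).map fun p => t p.1 p.2).sum + t x y0‖ ≤ 1 + 4 * δ :=
        key_est hn (l i) x y0 hy0.le hCpos H
      have hkeym : ‖((l i).map fun p => t p.1 p.2).sum - t x y0‖ ≤ 1 + 4 * δ := by
        have h1 : ((l i).map fun p => t p.1 p.2).sum - t x y0
            = ((l i).map fun p => t p.1 p.2).sum + t (-x) y0 := by
          rw [t_neg hn, sub_eq_add_neg]
        rw [h1]
        refine key_est hn (l i) (-x) y0 hy0.le hCpos fun g hg s hs => ?_
        have e : ((l i).map fun p => g p.2 • p.1).sum + s • (-x)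
            = ((l i).map fun p => g p.2 • p.1).sum + (-s) • x := by
          rw [smul_neg, neg_smul]
        rw [e]
        exact H g hg (-s) (by rwa [abs_neg])
      constructor
      · calc ‖z i + t x y0‖
            ≤ ‖z i - ((l i).map fun p => t p.1 p.2).sum‖
              + ‖((l i).map fun p => t p.1 p.2).sum + t x y0‖ := by
              have e : z i + t x y0 = (z i - ((l i).map fun p => t p.1 p.2).sum)
                  + (((l i).map fun p => t p.1 p.2).sum + t x y0) := by abel
              rw [e]; exact norm_add_le _ _
          _ ≤ δ + (1 + 4 * δ) := by
              have := (hl i).le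
              gcongr
          _ = 1 + 5 * δ := by ring
      · calc ‖z i - t x y0‖
            ≤ ‖z i - ((l i).map fun p => t p.1 p.2).sum‖
              + ‖((l i).map fun p => t p.1 p.2).sum - t x y0‖ := by
              have e : z i - t x y0 = (z i - ((l i).map fun p => t p.1 p.2).sum)
                  + (((l i).map fun p => t p.1 p.2).sum - t x y0) := by abel
              rw [e]; exact norm_add_le _ _
          _ ≤ δ + (1 + 4 * δ) := by
              have := (hl i).le
              gcongr
          _ = 1 + 5 * δ := by ring
  -- build the sequence
  set c : ℕ → ℝ := fun k => 1 / (k + 1) with hc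
  have hcpos : ∀ k, 0 < c k := fun k => by positivity
  have hc0 : Tendsto c atTop (𝓝 0) := tendsto_one_div_add_atTop_nhds_zero_nat
  choose W hW1 hW2 hW3 using fun k : ℕ => claim (c k) (hcpos k)
  have hlow : Tendsto (fun k => 1 - c k) atTop (𝓝 1) := by
    simpa using tendsto_const_nhds.sub hc0
  have hup : Tendsto (fun k => 1 + 5 * c k) atTop (𝓝 1) := by
    have : Tendsto (fun k => 1 + 5 * c k) atTop (𝓝 (1 + 5 * 0)) :=
      tendsto_const_nhds.add (tendsto_const_nhds.mul hc0)
    simpa using this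
  have hlow2 : Tendsto (fun k => 1 - 5 * c k) atTop (𝓝 1) := by
    have : Tendsto (fun k => 1 - 5 * c k) atTop (𝓝 (1 - 5 * 0)) :=
      tendsto_const_nhds.sub (tendsto_const_nhds.mul hc0)
    simpa using this
  refine ⟨W, hW1, ?_, fun i => ⟨?_, ?_⟩⟩
  · exact tendsto_of_tendsto_of_tendsto_of_le_of_le hlow tendsto_const_nhds
      (fun k => hW2 k) (fun k => hW1 k)
  · refine tendsto_of_tendsto_of_tendsto_of_le_of_le hlow2 hup (fun k => ?_) fun k => (hW3 k i).1
    -- lower bound : 2 - ‖z i - W k‖ ≤ ‖z i + W k‖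
    have h2 : ‖z i + z i‖ = 2 := by
      calc ‖z i + z i‖ = ‖(2 : ℝ) • z i‖ := by rw [two_smul]
        _ = 2 := by rw [norm_smul, hz i, mul_one]; norm_num
    have htri : ‖z i + z i‖ ≤ ‖z i + W k‖ + ‖z i - W k‖ := by
      have e : z i + z i = (z i + W k) + (z i - W k) := by abel
      rw [e]; exact norm_add_le _ _
    have := (hW3 k i).2
    linarith
  · refine tendsto_of_tendsto_of_tendsto_of_le_of_le hlow2 hup (fun k => ?_) fun k => (hW3 k i).2
    have h2 : ‖z i + z i‖ = 2 := by
      calc ‖z i + z i‖ = ‖(2 : ℝ) • z i‖ := by rw [two_smul]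
        _ = 2 := by rw [norm_smul, hz i, mul_one]; norm_num
    have htri : ‖z i + z i‖ ≤ ‖z i + W k‖ + ‖z i - W k‖ := by
      have e : z i + z i = (z i + W k) + (z i - W k) := by abel
      rw [e]; exact norm_add_le _ _
    have := (hW3 k i).1
    linarith
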